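/- Fix N ∈ ℕ. Let Y₀ be a random variable with values in {0,…,N}, independent of (P,R), and let Y₁ be a random variable whose conditional distribution given (Y₀, P, R) = (k, p, r) is that of B₁ + B₂ with B₁, B₂ independent, B₁ ~ Binomial(k, r), B₂ ~ Binomial(N−k, 1−p). Assume Y₁ has the same distribution as Y₀. Then E[Y₀] = N·(1 − E[P]) / (2 − E[P] − E[R]). -/

import Mathlib

open MeasureTheory ProbabilityTheory Finset

/-- The probability mass function of the binomial distribution with `n` trials and success
probability `q`, evaluated at `j`. -/
noncomputable def binomPMF (n : ℕ) (q : ℝ) (j : ℕ) : ℝ :=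
  (n.choose j : ℝ) * q ^ j * (1 - q) ^ (n - j)

/-- The pmf at `m` of `B₁ + B₂` with `B₁ ~ Binomial(k, r)` and `B₂ ~ Binomial(N − k, 1 − p)`
independent. -/
noncomputable def convPMF (N k : ℕ) (p r : ℝ) (m : ℕ) : ℝ :=
  ∑ j ∈ Finset.range (m + 1), binomPMF k r j * binomPMF (N - k) (1 - p) (m - j)

lemma binomPMF_eq_zero {n j : ℕ} (h : n < j) (q : ℝ) : binomPMF n q j = 0 := by
  simp [binomPMF, Nat.choose_eq_zero_of_lt h]

lemma binomPMF_sum (n : ℕ) (q : ℝ) : ∑ j ∈ range (n + 1), binomPMF n q j = 1 := by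
  have := add_pow q (1 - q) n
  simp only [add_sub_cancel, one_pow] at this
  rw [eq_comm, this]
  exact Finset.sum_congr rfl fun j hj => by unfold binomPMF; ring

lemma binomPMF_mean (n : ℕ) (q : ℝ) :
    ∑ j ∈ range (n + 1), (j : ℝ) * binomPMF n q j = n * q := by
  cases n with
  | zero => simp
  | succ n =>
    rw [Finset.sum_range_succ' _ (n + 1)]
    simp only [Nat.cast_zero, zero_mul, add_zero]
    have : ∀ i, ((i + 1 : ℕ) : ℝ) * binomPMF (n + 1) q (i + 1)
        = ((n + 1 : ℕ) : ℝ) * q * binomPMF n q i := by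
      intro i
      unfold binomPMF
      have h : ((i + 1 : ℕ) : ℝ) * ((n + 1).choose (i + 1) : ℝ)
          = ((n + 1 : ℕ) : ℝ) * (n.choose i : ℝ) := by
        rw [← Nat.cast_mul, ← Nat.cast_mul]
        congr 1
        have := Nat.add_one_mul_choose_eq n i
        rw [this, mul_comm]
      have h2 : n + 1 - (i + 1) = n - i := by omega
      rw [h2]
      calc ((i + 1 : ℕ) : ℝ) * ((n + 1).choose (i + 1) * q ^ (i + 1) * (1 - q) ^ (n - i))
          = (((i + 1 : ℕ) : ℝ) * ((n + 1).choose (i + 1))) * q ^ (i + 1) * (1 - q) ^ (n - i) := by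
            push_cast; ring
        _ = (((n + 1 : ℕ) : ℝ) * (n.choose i)) * q ^ (i + 1) * (1 - q) ^ (n - i) := by rw [h]
        _ = ((n + 1 : ℕ) : ℝ) * q * (n.choose i * q ^ i * (1 - q) ^ (n - i)) := by push_cast; ring
    rw [Finset.sum_congr rfl fun i _ => by
      have := this i
      push_cast at this ⊢
      exact this]
    rw [← Finset.mul_sum, binomPMF_sum]
    push_cast; ring

lemma sum_binomPMF_trunc {n M : ℕ} (h : n ≤ M) (q : ℝ) (g : ℕ → ℝ) :
    ∑ l ∈ range (M + 1), g l * binomPMF n q l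
      = ∑ l ∈ range (n + 1), g l * binomPMF n q l := by
  rw [eq_comm]
  refine Finset.sum_subset (Finset.range_subset_range.mpr (by omega)) fun x hx hnx => ?_
  rw [binomPMF_eq_zero (by simp at hx hnx; omega), mul_zero]

lemma conv_mean {N k : ℕ} (hk : k ≤ N) (p r : ℝ) :
    ∑ m ∈ range (N + 1), (m : ℝ) * convPMF N k p r m
      = k * r + (N - k : ℕ) * (1 - p) := by
  unfold convPMF
  simp only [Finset.mul_sum]
  rw [Finset.sum_comm' (s' := fun j => Icc j N) (t' := range (N+1)) (fun m j => by
    simp only [mem_range, mem_Icc, Nat.lt_succ_iff]; omega)]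
  have hinner : ∀ j ∈ range (N + 1),
      ∑ m ∈ Icc j N, (m : ℝ) * (binomPMF k r j * binomPMF (N - k) (1 - p) (m - j))
        = ∑ l ∈ range (N - j + 1),
            (((j : ℝ) + l) * binomPMF (N - k) (1 - p) l) * binomPMF k r j := by
    intro j hj
    simp only [mem_range, Nat.lt_succ_iff] at hj
    rw [← Finset.Ico_add_one_right_eq_Icc, Finset.sum_Ico_eq_sum_range]
    have : N + 1 - j = N - j + 1 := by omega
    rw [this]
    refine Finset.sum_congr rfl fun l hl => ?_
    have : j + l - j = l := by omega
    rw [this]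
    push_cast
    ring
  rw [Finset.sum_congr rfl hinner]
  rw [Finset.sum_congr rfl (fun x _ => (Finset.sum_mul (range (N - x + 1))
    (fun l => ((x : ℝ) + l) * binomPMF (N - k) (1 - p) l) (binomPMF k r x)).symm)]
  rw [sum_binomPMF_trunc hk r
    (fun x => ∑ l ∈ range (N - x + 1), ((x : ℝ) + l) * binomPMF (N - k) (1 - p) l)]
  have hinner2 : ∀ j ∈ range (k + 1),
      (∑ l ∈ range (N - j + 1), ((j : ℝ) + l) * binomPMF (N - k) (1 - p) l)
        = (j : ℝ) + (N - k : ℕ) * (1 - p) := by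
    intro j hj
    simp only [mem_range, Nat.lt_succ_iff] at hj
    rw [show ∑ l ∈ range (N - j + 1), ((j : ℝ) + l) * binomPMF (N - k) (1 - p) l
        = ∑ l ∈ range (N - k + 1), ((j : ℝ) + l) * binomPMF (N - k) (1 - p) l from
      sum_binomPMF_trunc (by omega) _ _]
    have expand : ∀ l, ((j : ℝ) + l) * binomPMF (N - k) (1 - p) l
        = (j : ℝ) * binomPMF (N - k) (1 - p) l + (l : ℝ) * binomPMF (N - k) (1 - p) l := by
      intro l; ring
    rw [Finset.sum_congr rfl fun l _ => expand l, Finset.sum_add_distrib,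
      ← Finset.mul_sum, binomPMF_sum, binomPMF_mean, mul_one]
  have : ∀ j ∈ range (k + 1),
      (∑ l ∈ range (N - j + 1), ((j : ℝ) + l) * binomPMF (N - k) (1 - p) l) * binomPMF k r j
        = ((j : ℝ) + (N - k : ℕ) * (1 - p)) * binomPMF k r j := by
    intro j hj
    rw [hinner2 j hj]
  rw [Finset.sum_congr rfl this]
  have expand : ∀ j : ℕ, ((j : ℝ) + (N - k : ℕ) * (1 - p)) * binomPMF k r j
      = (j : ℝ) * binomPMF k r j + ((N - k : ℕ) * (1 - p)) * binomPMF k r j := fun j => by ring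
  rw [Finset.sum_congr rfl fun j _ => expand j, Finset.sum_add_distrib, ← Finset.mul_sum,
    binomPMF_sum, binomPMF_mean, mul_one]

lemma convPMF_eq_zero {N k m : ℕ} (hk : k ≤ N) (hm : N < m) (p r : ℝ) :
    convPMF N k p r m = 0 := by
  unfold convPMF
  refine Finset.sum_eq_zero fun j hj => ?_
  rcases le_or_gt j k with h | h
  · rw [binomPMF_eq_zero (n := N - k) (by omega) (1 - p), mul_zero]
  · rw [binomPMF_eq_zero h r, zero_mul]

lemma choose_le_two_pow_real (n j : ℕ) : (n.choose j : ℝ) ≤ 2 ^ n := by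
  rcases le_or_gt j n with h | h
  · have : n.choose j ≤ 2 ^ n := by
      calc n.choose j ≤ ∑ m ∈ Finset.range (n + 1), n.choose m :=
            Finset.single_le_sum (fun i _ => Nat.zero_le _) (by simp [Nat.lt_succ_iff, h])
        _ = 2 ^ n := Nat.sum_range_choose n
    exact_mod_cast this
  · rw [Nat.choose_eq_zero_of_lt h]; norm_num

lemma binomPMF_nonneg {q : ℝ} (h0 : 0 ≤ q) (h1 : q ≤ 1) (n j : ℕ) : 0 ≤ binomPMF n q j := by
  have : (0:ℝ) ≤ 1 - q := by linarith
  unfold binomPMF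
  positivity

lemma binomPMF_le_two_pow {q : ℝ} (h0 : 0 ≤ q) (h1 : q ≤ 1) (n j : ℕ) :
    binomPMF n q j ≤ 2 ^ n := by
  unfold binomPMF
  have h1q : (0:ℝ) ≤ 1 - q := by linarith
  calc (n.choose j : ℝ) * q ^ j * (1 - q) ^ (n - j)
      ≤ (n.choose j : ℝ) * 1 * 1 := by
        gcongr <;> [exact pow_le_one₀ h0 h1; exact pow_le_one₀ h1q (by linarith)]
    _ = (n.choose j : ℝ) := by ring
    _ ≤ 2 ^ n := choose_le_two_pow_real n j

lemma convPMF_bound {N k m : ℕ} (hk : k ≤ N) {p r : ℝ}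
    (hp0 : 0 ≤ p) (hp1 : p ≤ 1) (hr0 : 0 ≤ r) (hr1 : r ≤ 1) :
    |convPMF N k p r m| ≤ (m + 1) * (2 ^ N * 2 ^ N) := by
  have h1p0 : (0:ℝ) ≤ 1 - p := by linarith
  have h1p1 : (1:ℝ) - p ≤ 1 := by linarith
  have hterm : ∀ j ∈ Finset.range (m+1),
      binomPMF k r j * binomPMF (N - k) (1 - p) (m - j) ∈ Set.Icc (0:ℝ) (2 ^ N * 2 ^ N) := by
    intro j _
    constructor
    · exact mul_nonneg (binomPMF_nonneg hr0 hr1 _ _) (binomPMF_nonneg h1p0 h1p1 _ _)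
    · calc binomPMF k r j * binomPMF (N - k) (1 - p) (m - j)
          ≤ 2 ^ k * 2 ^ (N - k) := by
            exact mul_le_mul (binomPMF_le_two_pow hr0 hr1 _ _)
              (binomPMF_le_two_pow h1p0 h1p1 _ _) (binomPMF_nonneg h1p0 h1p1 _ _) (by positivity)
        _ ≤ 2 ^ N * 2 ^ N := by
            have h1 : (2:ℝ) ^ k ≤ 2 ^ N := pow_le_pow_right₀ one_le_two hk
            have h2 : (2:ℝ) ^ (N-k) ≤ 2 ^ N := pow_le_pow_right₀ one_le_two (by omega)
            exact mul_le_mul h1 h2 (by positivity) (by positivity)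
  unfold convPMF
  rw [abs_of_nonneg (Finset.sum_nonneg fun j hj => (hterm j hj).1)]
  calc (∑ j ∈ Finset.range (m+1), binomPMF k r j * binomPMF (N - k) (1 - p) (m - j))
      ≤ ∑ j ∈ Finset.range (m+1), (2 ^ N * 2 ^ N : ℝ) :=
        Finset.sum_le_sum fun j hj => (hterm j hj).2
    _ = (m + 1) * (2 ^ N * 2 ^ N) := by simp [mul_comm]

lemma convPMF_measurable (N m : ℕ) :
    Measurable fun x : ℕ × ℝ × ℝ => convPMF N x.1 x.2.1 x.2.2 m := by
  unfold convPMF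
  apply Finset.measurable_sum
  intro j _
  have h : Measurable fun y : (ℝ × ℝ) × ℕ =>
      binomPMF y.2 y.1.2 j * binomPMF (N - y.2) (1 - y.1.1) (m - j) := by
    apply measurable_from_prod_countable_left
    intro k
    dsimp only
    unfold binomPMF
    fun_prop
  exact h.comp (measurable_snd.prodMk measurable_fst)

set_option maxHeartbeats 1000000 in
/-- In the stationary resampling model,
`E[Y₀] = N·(1 − E[P])/(2 − E[P] − E[R])`. -/
theorem stmt_16
    {Ω : Type*} [MeasurableSpace Ω] (μ : Measure Ω) [IsProbabilityMeasure μ]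
    (P R : Ω → ℝ) (hP : Measurable P) (hR : Measurable R)
    (hPR : ∀ᵐ ω ∂μ, P ω ∈ Set.Ioo (0 : ℝ) 1 ∧ R ω ∈ Set.Ioo (0 : ℝ) 1)
    (N : ℕ) (Y₀ Y₁ : Ω → ℕ) (hY₀ : Measurable Y₀) (hY₁ : Measurable Y₁)
    (hY₀N : ∀ ω, Y₀ ω ≤ N)
    (hindep : IndepFun Y₀ (fun ω => (P ω, R ω)) μ)
    (hcond : ∀ (m : ℕ) (s : Set (ℕ × ℝ × ℝ)), MeasurableSet s →
      (μ {ω | Y₁ ω = m ∧ (Y₀ ω, P ω, R ω) ∈ s}).toReal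
        = ∫ ω in {ω | (Y₀ ω, P ω, R ω) ∈ s}, convPMF N (Y₀ ω) (P ω) (R ω) m ∂μ)
    (hstat : Measure.map Y₁ μ = Measure.map Y₀ μ) :
    ∫ ω, (Y₀ ω : ℝ) ∂μ
      = (N : ℝ) * (1 - ∫ ω, P ω ∂μ) / (2 - (∫ ω, P ω ∂μ) - ∫ ω, R ω ∂μ) := by
  have hcast : Measurable (fun n : ℕ => (n : ℝ)) := measurable_from_top
  have hf₀ : Measurable fun ω => (Y₀ ω : ℝ) := hcast.comp hY₀
  have hY₀int : Integrable (fun ω => (Y₀ ω : ℝ)) μ := by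
    refine Integrable.mono' (integrable_const (N:ℝ)) hf₀.aestronglyMeasurable
      (Filter.Eventually.of_forall fun ω => ?_)
    rw [Real.norm_eq_abs, abs_of_nonneg (by positivity)]
    exact_mod_cast hY₀N ω
  have hPint : Integrable P μ := by
    refine Integrable.mono' (integrable_const 1) hP.aestronglyMeasurable
      (hPR.mono fun ω h => ?_)
    rw [Real.norm_eq_abs, abs_of_nonneg h.1.1.le]; exact h.1.2.le
  have hRint : Integrable R μ := by
    refine Integrable.mono' (integrable_const 1) hR.aestronglyMeasurable
      (hPR.mono fun ω h => ?_)
    rw [Real.norm_eq_abs, abs_of_nonneg h.2.1.le]; exact h.2.2.le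
  have hGmeas : ∀ m, Measurable fun ω => convPMF N (Y₀ ω) (P ω) (R ω) m := by
    intro m
    have h2 := (convPMF_measurable N m).comp (hY₀.prodMk (hP.prodMk hR))
    exact h2
  have hGint : ∀ m, Integrable (fun ω => convPMF N (Y₀ ω) (P ω) (R ω) m) μ := by
    intro m
    refine Integrable.mono' (integrable_const (((m:ℝ) + 1) * (2 ^ N * 2 ^ N)))
      (hGmeas m).aestronglyMeasurable (hPR.mono fun ω h => ?_)
    rw [Real.norm_eq_abs]
    exact convPMF_bound (hY₀N ω) h.1.1.le h.1.2.le h.2.1.le h.2.2.le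
  -- Step A: μ(Y₁ = m) = 0 for m > N
  have hzero : ∀ m, N < m → μ {ω | Y₁ ω = m} = 0 := by
    intro m hm
    have h := hcond m Set.univ MeasurableSet.univ
    simp only [Set.mem_univ, and_true, Set.setOf_true, Measure.restrict_univ] at h
    have hz : ∀ ω, convPMF N (Y₀ ω) (P ω) (R ω) m = 0 := fun ω =>
      convPMF_eq_zero (hY₀N ω) hm _ _
    simp only [hz, integral_zero] at h
    exact ((ENNReal.toReal_eq_zero_iff _).mp h).resolve_right (measure_ne_top μ _)
  -- Step B: Y₁ ≤ N a.e.
  have haeY₁ : ∀ᵐ ω ∂μ, Y₁ ω ≤ N := by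
    rw [ae_iff]
    have hset : {ω | ¬ Y₁ ω ≤ N} = ⋃ i : ℕ, {ω | Y₁ ω = N + 1 + i} := by
      ext ω
      simp only [Set.mem_setOf_eq, not_le, Set.mem_iUnion]
      constructor
      · intro h; exact ⟨Y₁ ω - (N+1), by omega⟩
      · rintro ⟨i, hi⟩; omega
    rw [hset]
    exact measure_iUnion_null fun i => hzero _ (by omega)
  have hmeasY1set : ∀ m, MeasurableSet {ω | Y₁ ω = m} := fun m =>
    hY₁ (measurableSet_singleton m)
  -- Step C: E[Y₁] as finite sum
  have hEY₁ : ∫ ω, (Y₁ ω : ℝ) ∂μ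
      = ∑ m ∈ range (N+1), (m:ℝ) * (μ {ω | Y₁ ω = m}).toReal := by
    have hrepr : ∀ᵐ ω ∂μ, (Y₁ ω : ℝ)
        = ∑ m ∈ Finset.range (N+1),
            Set.indicator {ω' | Y₁ ω' = m} (fun _ => (m:ℝ)) ω := by
      filter_upwards [haeY₁] with ω hω
      rw [Finset.sum_eq_single (Y₁ ω)]
      · rw [Set.indicator_of_mem (by exact rfl)]
      · intro b _ hb
        rw [Set.indicator_of_notMem]
        exact fun hmem => hb hmem.symm
      · intro h
        exact absurd (Finset.mem_range.mpr (Nat.lt_succ_of_le hω)) h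
    rw [integral_congr_ae hrepr, integral_finset_sum _ (fun (m : ℕ) _ =>
      (integrable_const (m:ℝ)).indicator (hmeasY1set m))]
    refine Finset.sum_congr rfl fun m _ => ?_
    rw [integral_indicator_const _ (hmeasY1set m), smul_eq_mul, mul_comm]; rfl
  -- Step D
  have hD : ∀ m, (μ {ω | Y₁ ω = m}).toReal
      = ∫ ω, convPMF N (Y₀ ω) (P ω) (R ω) m ∂μ := by
    intro m
    have h := hcond m Set.univ MeasurableSet.univ
    simpa only [Set.mem_univ, and_true, Set.setOf_true, Measure.restrict_univ] using h
  -- Step E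
  have hEsum : ∑ m ∈ Finset.range (N+1), (m:ℝ) * ∫ ω, convPMF N (Y₀ ω) (P ω) (R ω) m ∂μ
      = ∫ ω, ((Y₀ ω : ℝ) * R ω + ((N - Y₀ ω : ℕ) : ℝ) * (1 - P ω)) ∂μ := by
    have hswap : ∀ m ∈ Finset.range (N+1),
        (m:ℝ) * ∫ ω, convPMF N (Y₀ ω) (P ω) (R ω) m ∂μ
          = ∫ ω, (m:ℝ) * convPMF N (Y₀ ω) (P ω) (R ω) m ∂μ := fun m _ =>
      (integral_const_mul _ _).symm
    rw [Finset.sum_congr rfl hswap,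
      ← integral_finset_sum _ (fun m _ => ((hGint m).const_mul _))]
    exact integral_congr_ae (Filter.Eventually.of_forall fun ω =>
      conv_mean (hY₀N ω) (P ω) (R ω))
  -- Stationarity
  have hstatE : ∫ ω, (Y₁ ω : ℝ) ∂μ = ∫ ω, (Y₀ ω : ℝ) ∂μ := by
    rw [← integral_map hY₁.aemeasurable hcast.aestronglyMeasurable, hstat,
      integral_map hY₀.aemeasurable hcast.aestronglyMeasurable]
  -- key equation
  have key : ∫ ω, (Y₀ ω : ℝ) ∂μ
      = ∫ ω, ((Y₀ ω : ℝ) * R ω + ((N - Y₀ ω : ℕ) : ℝ) * (1 - P ω)) ∂μ := by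
    rw [← hstatE, hEY₁, Finset.sum_congr rfl fun m _ => by rw [hD m], hEsum]
  -- decompose the RHS
  have hre : (fun ω => (Y₀ ω:ℝ) * R ω + ((N - Y₀ ω : ℕ):ℝ) * (1 - P ω))
      = fun ω => ((Y₀ ω:ℝ) * R ω + (Y₀ ω:ℝ) * P ω - (Y₀ ω:ℝ)) + ((N:ℝ) - (N:ℝ) * P ω) := by
    funext ω
    rw [Nat.cast_sub (hY₀N ω)]
    ring
  have h1 : Integrable (fun ω => (Y₀ ω:ℝ) * R ω) μ := by
    refine Integrable.mono' (integrable_const (N:ℝ)) (hf₀.mul hR).aestronglyMeasurable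
      (hPR.mono fun ω h => ?_)
    rw [Real.norm_eq_abs, abs_mul]
    have hb1 : |(Y₀ ω : ℝ)| ≤ N := by
      rw [abs_of_nonneg (by positivity)]; exact_mod_cast hY₀N ω
    have hb2 : |R ω| ≤ 1 := by rw [abs_of_nonneg h.2.1.le]; exact h.2.2.le
    calc |(Y₀ ω : ℝ)| * |R ω| ≤ (N:ℝ) * 1 :=
          mul_le_mul hb1 hb2 (abs_nonneg _) (by positivity)
      _ = (N:ℝ) := mul_one _
  have h2 : Integrable (fun ω => (Y₀ ω:ℝ) * P ω) μ := by
    refine Integrable.mono' (integrable_const (N:ℝ)) (hf₀.mul hP).aestronglyMeasurable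
      (hPR.mono fun ω h => ?_)
    rw [Real.norm_eq_abs, abs_mul]
    have hb1 : |(Y₀ ω : ℝ)| ≤ N := by
      rw [abs_of_nonneg (by positivity)]; exact_mod_cast hY₀N ω
    have hb2 : |P ω| ≤ 1 := by rw [abs_of_nonneg h.1.1.le]; exact h.1.2.le
    calc |(Y₀ ω : ℝ)| * |P ω| ≤ (N:ℝ) * 1 :=
          mul_le_mul hb1 hb2 (abs_nonneg _) (by positivity)
      _ = (N:ℝ) := mul_one _
  have h3 : Integrable (fun ω => (N:ℝ) - (N:ℝ) * P ω) μ :=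
    (integrable_const _).sub (hPint.const_mul _)
  -- independence products
  have hiR : ∫ ω, (Y₀ ω:ℝ) * R ω ∂μ = (∫ ω, (Y₀ ω:ℝ) ∂μ) * ∫ ω, R ω ∂μ := by
    have h := (hindep.comp hcast measurable_snd).integral_mul_eq_mul_integral
      hf₀.aestronglyMeasurable hR.aestronglyMeasurable
    simpa only [Function.comp, Pi.mul_apply] using h
  have hiP : ∫ ω, (Y₀ ω:ℝ) * P ω ∂μ = (∫ ω, (Y₀ ω:ℝ) ∂μ) * ∫ ω, P ω ∂μ := by
    have h := (hindep.comp hcast measurable_fst).integral_mul_eq_mul_integral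
      hf₀.aestronglyMeasurable hP.aestronglyMeasurable
    simpa only [Function.comp, Pi.mul_apply] using h
  -- compute the RHS integral
  have hRHS : ∫ ω, ((Y₀ ω:ℝ) * R ω + ((N - Y₀ ω : ℕ):ℝ) * (1 - P ω)) ∂μ
      = ((∫ ω, (Y₀ ω:ℝ) ∂μ) * (∫ ω, R ω ∂μ) + (∫ ω, (Y₀ ω:ℝ) ∂μ) * (∫ ω, P ω ∂μ)
          - ∫ ω, (Y₀ ω:ℝ) ∂μ) + ((N:ℝ) - (N:ℝ) * ∫ ω, P ω ∂μ) := by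
    have h12 : Integrable (fun ω => (Y₀ ω:ℝ) * R ω + (Y₀ ω:ℝ) * P ω) μ := h1.add h2
    have h123 : Integrable (fun ω => (Y₀ ω:ℝ) * R ω + (Y₀ ω:ℝ) * P ω - (Y₀ ω:ℝ)) μ :=
      h12.sub hY₀int
    rw [hre, integral_add h123 h3, integral_sub h12 hY₀int, integral_add h1 h2,
      integral_sub (integrable_const _) (hPint.const_mul _),
      integral_const_mul, integral_const, hiR, hiP]
    simp [measure_univ]
  -- strict bounds on means
  have honeP : ∫ ω, P ω ∂μ < 1 := by
    have hpos : 0 < ∫ ω, (1 - P ω) ∂μ := by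
      have hint1 : Integrable (fun ω => 1 - P ω) μ := (integrable_const 1).sub hPint
      rw [integral_pos_iff_support_of_nonneg_ae
        (hPR.mono fun ω h => by simp only [Pi.zero_apply]; linarith [h.1.2]) hint1]
      have hsupp : ∀ᵐ ω ∂μ, ω ∈ Function.support (fun ω => 1 - P ω) :=
        hPR.mono fun ω h => by
          simp only [Function.mem_support]
          intro hc
          linarith [h.1.2]
      have hcompl : μ (Function.support (fun ω => 1 - P ω))ᶜ = 0 := by
        have := ae_iff.mp hsupp
        have hseteq : (Function.support (fun ω => 1 - P ω))ᶜ
            = {a | ¬ a ∈ Function.support (fun ω => 1 - P ω)} := rfl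
        rw [hseteq]
        exact this
      by_contra hle
      push_neg at hle
      have h0 : μ (Function.support (fun ω => 1 - P ω)) = 0 := le_antisymm hle zero_le
      have huniv : (1 : ENNReal) = μ Set.univ := (measure_univ).symm
      have : μ Set.univ ≤ μ (Function.support (fun ω => 1 - P ω))
          + μ (Function.support (fun ω => 1 - P ω))ᶜ := by
        rw [← Set.union_compl_self (Function.support (fun ω => 1 - P ω))]
        exact measure_union_le _ _
      rw [h0, hcompl] at this
      simp [← huniv] at this
    rw [integral_sub (integrable_const 1) hPint, integral_const] at hpos
    simp only [measure_univ, probReal_univ, smul_eq_mul, one_mul] at hpos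
    linarith
  have honeR : ∫ ω, R ω ∂μ < 1 := by
    have hpos : 0 < ∫ ω, (1 - R ω) ∂μ := by
      have hint1 : Integrable (fun ω => 1 - R ω) μ := (integrable_const 1).sub hRint
      rw [integral_pos_iff_support_of_nonneg_ae
        (hPR.mono fun ω h => by simp only [Pi.zero_apply]; linarith [h.2.2]) hint1]
      have hsupp : ∀ᵐ ω ∂μ, ω ∈ Function.support (fun ω => 1 - R ω) :=
        hPR.mono fun ω h => by
          simp only [Function.mem_support]
          intro hc
          linarith [h.2.2]
      have hcompl : μ (Function.support (fun ω => 1 - R ω))ᶜ = 0 := by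
        have := ae_iff.mp hsupp
        have hseteq : (Function.support (fun ω => 1 - R ω))ᶜ
            = {a | ¬ a ∈ Function.support (fun ω => 1 - R ω)} := rfl
        rw [hseteq]
        exact this
      by_contra hle
      push_neg at hle
      have h0 : μ (Function.support (fun ω => 1 - R ω)) = 0 := le_antisymm hle zero_le
      have huniv : (1 : ENNReal) = μ Set.univ := (measure_univ).symm
      have : μ Set.univ ≤ μ (Function.support (fun ω => 1 - R ω))
          + μ (Function.support (fun ω => 1 - R ω))ᶜ := by
        rw [← Set.union_compl_self (Function.support (fun ω => 1 - R ω))]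
        exact measure_union_le _ _
      rw [h0, hcompl] at this
      simp [← huniv] at this
    rw [integral_sub (integrable_const 1) hRint, integral_const] at hpos
    simp only [measure_univ, probReal_univ, smul_eq_mul, one_mul] at hpos
    linarith
  -- final algebra
  set a := ∫ ω, (Y₀ ω:ℝ) ∂μ
  set EP := ∫ ω, P ω ∂μ
  set ER := ∫ ω, R ω ∂μ
  have heq : a = (a * ER + a * EP - a) + ((N:ℝ) - (N:ℝ) * EP) := key.trans hRHS
  have hden : (2 - EP - ER) ≠ 0 := by linarith
  rw [eq_div_iff hden]
  linear_combination heq
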